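/- Fix ε > 0 and assume Hypotheses 1, 2 and 3. If (U, b) and (V, c) are two solutions of the ε-penalized optimal-stopping master equation with U and V of class C^1, then U = V; moreover, U is a monotone map on O_d. -/

import Mathlib

open scoped RealInnerProductSpace
noncomputable section

/-- `ℝ^d` with the Euclidean inner product. -/
abbrev Euc (d : ℕ) := EuclideanSpace ℝ (Fin d)

/-- The positive orthant `O_d = (ℝ≥0)^d`. -/
def Od (d : ℕ) : Set (Euc d) := {x | ∀ i, 0 ≤ x i}

/-- `B_R = {x ∈ O_d : x_1 + ... + x_d ≤ R}`. -/
def Ball1 (d : ℕ) (R : ℝ) : Set (Euc d) := {x | x ∈ Od d ∧ ∑ i, x i ≤ R}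

/-- The drift vector `(1/ε) b(x) ∗ x` (componentwise product) of the penalized problem. -/
def penDrift (d : ℕ) (ε : ℝ) (b : Euc d → Fin d → ℝ) (x : Euc d) : Euc d :=
  WithLp.toLp 2 (fun j => (1/ε) * (b x j * x j))

/-- A pair `(U, b)` is a solution of the ε-penalized optimal-stopping master equation:
`b` is a selection of the subdifferential of `β(t) = max(t,0)` along `U`, and
`r Uⁱ + (1/ε) β(Uⁱ) + ⟨(1/ε) b∗x + F(x,U), ∇ₓUⁱ⟩ + λ(Uⁱ − (T*U(Tx))ⁱ) = Gⁱ(x,U)` on `O_d`. -/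
def IsPenalizedSolOS (d : ℕ) (F G : Euc d → Euc d → Euc d) (r lam ε : ℝ)
    (T : Euc d →L[ℝ] Euc d) (U : Euc d → Euc d) (b : Euc d → Fin d → ℝ) : Prop :=
  ContDiff ℝ 1 U ∧
  (∀ x ∈ Od d, ∀ i, b x i ∈ Set.Icc (0:ℝ) 1 ∧
    (U x i < 0 → b x i = 0) ∧ (0 < U x i → b x i = 1)) ∧
  ∀ x ∈ Od d, ∀ i,
    r * U x i + (1/ε) * max (U x i) 0
      + fderiv ℝ (fun z : Euc d => U z i) x (penDrift d ε b x + F x (U x))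
      + lam * (U x i - ContinuousLinearMap.adjoint T (U (T x)) i)
      = G x (U x) i


lemma isCompact_Ball1 (d : ℕ) (R : ℝ) (hR : 0 ≤ R) : IsCompact (Ball1 d R) := by
  have hclosed : IsClosed (Ball1 d R) := by
    have h1 : IsClosed {x : Euc d | ∀ i, 0 ≤ x i} := by
      have : {x : Euc d | ∀ i, 0 ≤ x i} = ⋂ i, {x : Euc d | 0 ≤ x i} := by ext x; simp
      rw [this]
      exact isClosed_iInter fun i =>
        isClosed_le continuous_const (EuclideanSpace.proj i (𝕜 := ℝ)).continuous
    have h2 : IsClosed {x : Euc d | ∑ i, x i ≤ R} :=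
      isClosed_le (continuous_finset_sum _ fun i _ =>
        (EuclideanSpace.proj i (𝕜 := ℝ)).continuous) continuous_const
    exact h1.inter h2
  refine (isCompact_closedBall (0 : Euc d) R).of_isClosed_subset hclosed ?_
  intro x hx
  simp only [Metric.mem_closedBall, dist_zero_right]
  rw [EuclideanSpace.norm_eq]
  have hsq : ∑ i, x i ^ 2 ≤ (∑ i, x i) ^ 2 :=
    Finset.sum_sq_le_sq_sum_of_nonneg fun i _ => hx.1 i
  have : √(∑ i, ‖x i‖ ^ 2) ≤ √(R ^ 2) := by
    apply Real.sqrt_le_sqrt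
    have : ∑ i, ‖x i‖ ^ 2 = ∑ i, x i ^ 2 := by
      refine Finset.sum_congr rfl fun i _ => ?_; rw [Real.norm_eq_abs, sq_abs]
    rw [this]
    refine hsq.trans ?_
    have h0 : 0 ≤ ∑ i, x i := Finset.sum_nonneg fun i _ => hx.1 i
    exact pow_le_pow_left₀ h0 hx.2 2
  simpa [Real.sqrt_sq hR] using this

lemma dir_min {d : ℕ} {f : Euc d → ℝ} {f' : Euc d →L[ℝ] ℝ} {S : Set (Euc d)} {x v : Euc d}
    (hf : HasFDerivAt f f' x) (hmin : IsMinOn f S x)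
    (hfe : ∀ᶠ t in nhdsWithin (0:ℝ) (Set.Ioi 0), x + t • v ∈ S) : 0 ≤ f' v := by
  have hg : HasDerivAt (fun t : ℝ => f (x + t • v)) (f' v) 0 := by
    have hline : HasDerivAt (fun t : ℝ => x + t • v) v 0 := by
      simpa using ((hasDerivAt_id (0:ℝ)).smul_const v).const_add x
    have hf' : HasFDerivAt f f' (x + (0:ℝ) • v) := by simpa using hf
    exact hf'.comp_hasDerivAt 0 hline
  have hslope := hasDerivAt_iff_tendsto_slope.1 hg
  have hsub : nhdsWithin (0:ℝ) (Set.Ioi 0) ≤ nhdsWithin (0:ℝ) {(0:ℝ)}ᶜ :=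
    nhdsWithin_mono _ (fun t ht => ne_of_gt ht)
  refine ge_of_tendsto (hslope.mono_left hsub) ?_
  filter_upwards [hfe, self_mem_nhdsWithin] with t hmem (ht : 0 < t)
  have hval : f x ≤ f (x + t • v) := isMinOn_iff.1 hmin _ hmem
  have heq : slope (fun t : ℝ => f (x + t • v)) 0 t
      = (f (x + t • v) - f ((0:ℝ) • v + x)) / t := by
    simp [slope_def_field, div_eq_inv_mul]
  rw [heq]
  have h0 : f ((0:ℝ) • v + x) = f x := by norm_num
  rw [h0]
  exact div_nonneg (by linarith) ht.le

lemma subgrad (u v bu : ℝ) (hbu0 : 0 ≤ bu) (hbu1 : bu ≤ 1)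
    (hneg : u < 0 → bu = 0) (hpos : 0 < u → bu = 1) :
    bu * (v - u) ≤ max v 0 - max u 0 := by
  rcases lt_trichotomy u 0 with h | h | h
  · rw [hneg h, max_eq_right h.le]
    simpa using le_max_right v 0
  · subst h
    simp only [max_self, sub_zero, sub_zero]
    rcases le_or_gt 0 v with hv | hv
    · nlinarith [le_max_left v 0]
    · nlinarith [le_max_right v 0]
  · rw [hpos h, max_eq_left h.le, one_mul]
    have := le_max_left v 0
    linarith

lemma pen_ineq (u v a s bu cv : ℝ) (ha : 0 ≤ a) (hs : 0 ≤ s)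
    (hbu0 : 0 ≤ bu) (hbu1 : bu ≤ 1) (hbuneg : u < 0 → bu = 0) (hbupos : 0 < u → bu = 1)
    (hcv0 : 0 ≤ cv) (hcv1 : cv ≤ 1) (hcvneg : v < 0 → cv = 0) (hcvpos : 0 < v → cv = 1) :
    (max u 0 - max v 0) * (a - s) ≤ (u - v) * (bu * a - cv * s) := by
  have h1 : bu * (v - u) ≤ max v 0 - max u 0 := subgrad u v bu hbu0 hbu1 hbuneg hbupos
  have h2 : cv * (u - v) ≤ max u 0 - max v 0 := subgrad v u cv hcv0 hcv1 hcvneg hcvpos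
  nlinarith [mul_le_mul_of_nonneg_left h1 ha, mul_le_mul_of_nonneg_left h2 hs]

/-- Feasible directions stay in `B_R` for small positive times. -/
lemma feas_dir {d : ℕ} {R : ℝ} {x ξ : Euc d} (hx : x ∈ Ball1 d R)
    (hξ0 : ∀ i, x i = 0 → ξ i ≤ 0) (hξsum : ∑ i, x i = R → 0 ≤ ∑ i, ξ i) :
    ∀ᶠ t in nhdsWithin (0:ℝ) (Set.Ioi 0), x + t • (-ξ) ∈ Ball1 d R := by
  have hcoord : ∀ᶠ t in nhdsWithin (0:ℝ) (Set.Ioi 0), ∀ i, 0 ≤ (x + t • (-ξ)) i := by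
    rw [Filter.eventually_all]
    intro i
    have happ : ∀ t : ℝ, (x + t • (-ξ)) i = x i + t * (-ξ i) := by intro t; simp
    rcases eq_or_lt_of_le (hx.1 i) with h0 | hpos
    · filter_upwards [self_mem_nhdsWithin] with t (ht : 0 < t)
      rw [happ, ← h0]
      have := hξ0 i h0.symm
      nlinarith
    · have hcont : Filter.Tendsto (fun t : ℝ => x i + t * (-ξ i)) (nhds 0) (nhds (x i)) := by
        have : Continuous (fun t : ℝ => x i + t * (-ξ i)) :=
          continuous_const.add (continuous_id.mul continuous_const)
        simpa using this.tendsto 0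
      have hev : ∀ᶠ t in nhds (0:ℝ), 0 < x i + t * (-ξ i) :=
        hcont.eventually (eventually_gt_nhds hpos)
      filter_upwards [nhdsWithin_le_nhds hev] with t ht
      rw [happ]; exact ht.le
  have hsum : ∀ᶠ t in nhdsWithin (0:ℝ) (Set.Ioi 0), ∑ i, (x + t • (-ξ)) i ≤ R := by
    have hsm : ∀ t : ℝ, ∑ i, (x + t • (-ξ)) i = ∑ i, x i - t * ∑ i, ξ i := by
      intro t
      rw [Finset.mul_sum, ← Finset.sum_sub_distrib]
      refine Finset.sum_congr rfl fun i _ => by simp; ring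
    rcases eq_or_lt_of_le hx.2 with hR | hR
    · filter_upwards [self_mem_nhdsWithin] with t (ht : 0 < t)
      rw [hsm, hR]
      have := hξsum hR
      nlinarith
    · have hcont : Filter.Tendsto (fun t : ℝ => ∑ i, x i - t * ∑ i, ξ i) (nhds 0)
          (nhds (∑ i, x i)) := by
        have : Continuous (fun t : ℝ => ∑ i, x i - t * ∑ i, ξ i) :=
          continuous_const.sub (continuous_id.mul continuous_const)
        simpa using this.tendsto 0
      have hev : ∀ᶠ t in nhds (0:ℝ), ∑ i, x i - t * ∑ i, ξ i < R :=
        hcont.eventually (eventually_lt_nhds hR)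
      filter_upwards [nhdsWithin_le_nhds hev] with t ht
      rw [hsm]; exact ht.le
  filter_upwards [hcoord, hsum] with t h1 h2
  exact ⟨h1, h2⟩

lemma core_mono (d : ℕ) (ε : ℝ) (hε : 0 < ε)
    (F G : Euc d → Euc d → Euc d) (r lam : ℝ) (hr : 0 < r) (hlam : 0 ≤ lam)
    (T : Euc d →L[ℝ] Euc d)
    (hyp1F : ∀ x ∈ Od d, ∀ p : Euc d, ∀ i, x i = 0 → F x p i ≤ 0)
    (R₀ : ℝ) (hR₀ : 0 < R₀)
    (hyp2F : ∀ x ∈ Od d, ∀ p : Euc d, R₀ ≤ ∑ i, x i → 0 ≤ ∑ i, F x p i)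
    (hyp2T : ∀ R ≥ R₀, ∀ x ∈ Ball1 d R, T x ∈ Ball1 d R)
    (hyp3 : ∀ x ∈ Od d, ∀ y ∈ Od d, ∀ p q : Euc d,
      0 ≤ ⟪G x p - G y q, x - y⟫ + ⟪F x p - F y q, p - q⟫)
    (U V : Euc d → Euc d) (b c : Euc d → Fin d → ℝ)
    (hU : IsPenalizedSolOS d F G r lam ε T U b)
    (hV : IsPenalizedSolOS d F G r lam ε T V c) :
    ∀ x ∈ Od d, ∀ y ∈ Od d, 0 ≤ ⟪U x - V y, x - y⟫ := by
  intro x hx y hy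
  obtain ⟨hUC, hUb, hUpde⟩ := hU
  obtain ⟨hVC, hVb, hVpde⟩ := hV
  set R : ℝ := max R₀ (max (∑ i, x i) (∑ i, y i)) with hRdef
  have hRR₀ : R₀ ≤ R := le_max_left _ _
  have hR0 : (0:ℝ) ≤ R := hR₀.le.trans hRR₀
  have hxB : x ∈ Ball1 d R := ⟨hx, le_max_of_le_right (le_max_left _ _)⟩
  have hyB : y ∈ Ball1 d R := ⟨hy, le_max_of_le_right (le_max_right _ _)⟩
  have hKcpt : IsCompact (Ball1 d R ×ˢ Ball1 d R) :=
    (isCompact_Ball1 d R hR0).prod (isCompact_Ball1 d R hR0)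
  have h0B : (0 : Euc d) ∈ Ball1 d R := by
    constructor
    · intro i; simp [Od]
    · simpa using hR0
  have hKne : (Ball1 d R ×ˢ Ball1 d R).Nonempty := ⟨(0,0), Set.mk_mem_prod h0B h0B⟩
  have hWc : Continuous (fun p : Euc d × Euc d => (⟪U p.1 - V p.2, p.1 - p.2⟫ : ℝ)) :=
    Continuous.inner ((hUC.continuous.comp continuous_fst).sub (hVC.continuous.comp continuous_snd))
      (continuous_fst.sub continuous_snd)
  obtain ⟨⟨xm, ym⟩, hp, hmin⟩ := hKcpt.exists_isMinOn hKne hWc.continuousOn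
  have hxmB : xm ∈ Ball1 d R := hp.1
  have hymB : ym ∈ Ball1 d R := hp.2
  have hxmO : xm ∈ Od d := hxmB.1
  have hymO : ym ∈ Od d := hymB.1
  have innSum : ∀ a b : Euc d, (⟪a, b⟫ : ℝ) = ∑ i, a i * b i := fun a b => by
    simp [PiLp.inner_apply, RCLike.inner_apply, conj_trivial, mul_comm]
  -- main inequality at the minimum point
  have hmain : 0 ≤ (⟪U xm - V ym, xm - ym⟫ : ℝ) := by
    have hUd : HasFDerivAt U (fderiv ℝ U xm) xm := (hUC.differentiable one_ne_zero xm).hasFDerivAt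
    have hVd : HasFDerivAt V (fderiv ℝ V ym) ym := (hVC.differentiable one_ne_zero ym).hasFDerivAt
    set DU := fderiv ℝ U xm with hDUdef
    set DV := fderiv ℝ V ym with hDVdef
    set ξ : Euc d := penDrift d ε b xm + F xm (U xm) with hξdef
    set η : Euc d := penDrift d ε c ym + F ym (V ym) with hηdef
    have hξi : ∀ i, ξ i = (1/ε) * (b xm i * xm i) + F xm (U xm) i := fun i => by
      rw [hξdef]; rfl
    have hηi : ∀ i, η i = (1/ε) * (c ym i * ym i) + F ym (V ym) i := fun i => by
      rw [hηdef]; rfl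
    have hcompU : ∀ (w : Euc d) (i : Fin d), fderiv ℝ (fun z => U z i) xm w = DU w i := by
      intro w i
      have h : HasFDerivAt (fun z => U z i) ((EuclideanSpace.proj i (𝕜 := ℝ)).comp DU) xm :=
        (EuclideanSpace.proj i (𝕜 := ℝ)).hasFDerivAt.comp xm hUd
      rw [h.fderiv]; rfl
    have hcompV : ∀ (w : Euc d) (i : Fin d), fderiv ℝ (fun z => V z i) ym w = DV w i := by
      intro w i
      have h : HasFDerivAt (fun z => V z i) ((EuclideanSpace.proj i (𝕜 := ℝ)).comp DV) ym :=
        (EuclideanSpace.proj i (𝕜 := ℝ)).hasFDerivAt.comp ym hVd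
      rw [h.fderiv]; rfl
    have hpU : ∀ i, r * U xm i + (1/ε) * max (U xm i) 0 + DU ξ i
        + lam * (U xm i - ContinuousLinearMap.adjoint T (U (T xm)) i) = G xm (U xm) i := by
      intro i
      have h := hUpde xm hxmO i
      rw [← hξdef, hcompU] at h
      exact h
    have hpV : ∀ i, r * V ym i + (1/ε) * max (V ym i) 0 + DV η i
        + lam * (V ym i - ContinuousLinearMap.adjoint T (V (T ym)) i) = G ym (V ym) i := by
      intro i
      have h := hVpde ym hymO i
      rw [← hηdef, hcompV] at h
      exact h
    -- feasibility of the backward drift directions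
    have hfeasx : ∀ᶠ t in nhdsWithin (0:ℝ) (Set.Ioi 0), xm + t • (-ξ) ∈ Ball1 d R := by
      refine feas_dir hxmB (fun i h0 => ?_) (fun hsum => ?_)
      · rw [hξi i, h0]
        simpa using hyp1F xm hxmO (U xm) i h0
      · have h1 : ∑ i, ξ i = (1/ε) * ∑ i, b xm i * xm i + ∑ i, F xm (U xm) i := by
          rw [Finset.mul_sum, ← Finset.sum_add_distrib]
          exact Finset.sum_congr rfl fun i _ => hξi i
        rw [h1]
        have h2 : 0 ≤ ∑ i, b xm i * xm i :=
          Finset.sum_nonneg fun i _ => mul_nonneg (hUb xm hxmO i).1.1 (hxmO i)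
        have h3 : 0 ≤ ∑ i, F xm (U xm) i := hyp2F xm hxmO (U xm) (hsum ▸ hRR₀)
        positivity
    have hfeasy : ∀ᶠ t in nhdsWithin (0:ℝ) (Set.Ioi 0), ym + t • (-η) ∈ Ball1 d R := by
      refine feas_dir hymB (fun i h0 => ?_) (fun hsum => ?_)
      · rw [hηi i, h0]
        simpa using hyp1F ym hymO (V ym) i h0
      · have h1 : ∑ i, η i = (1/ε) * ∑ i, c ym i * ym i + ∑ i, F ym (V ym) i := by
          rw [Finset.mul_sum, ← Finset.sum_add_distrib]
          exact Finset.sum_congr rfl fun i _ => hηi i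
        rw [h1]
        have h2 : 0 ≤ ∑ i, c ym i * ym i :=
          Finset.sum_nonneg fun i _ => mul_nonneg (hVb ym hymO i).1.1 (hymO i)
        have h3 : 0 ≤ ∑ i, F ym (V ym) i := hyp2F ym hymO (V ym) (hsum ▸ hRR₀)
        positivity
    -- restricted minimality
    have hminx : IsMinOn (fun z => (⟪U z - V ym, z - ym⟫ : ℝ)) (Ball1 d R) xm := by
      rw [isMinOn_iff]
      intro z hz
      exact isMinOn_iff.1 hmin (z, ym) (Set.mk_mem_prod hz hymB)
    have hminy : IsMinOn (fun z => (⟪U xm - V z, xm - z⟫ : ℝ)) (Ball1 d R) ym := by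
      rw [isMinOn_iff]
      intro z hz
      exact isMinOn_iff.1 hmin (xm, z) (Set.mk_mem_prod hxmB hz)
    -- first-order conditions
    have hL1 : HasFDerivAt (fun z => (⟪U z - V ym, z - ym⟫ : ℝ))
        ((fderivInnerCLM ℝ (U xm - V ym, xm - ym)).comp
          (DU.prod (ContinuousLinearMap.id ℝ (Euc d)))) xm := by
      have hf : HasFDerivAt (fun z => U z - V ym) DU xm := hUd.sub_const _
      have hg : HasFDerivAt (fun z : Euc d => z - ym) (ContinuousLinearMap.id ℝ (Euc d)) xm :=
        (hasFDerivAt_id xm).sub_const _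
      exact hf.inner ℝ hg
    have hL2 : HasFDerivAt (fun z => (⟪U xm - V z, xm - z⟫ : ℝ))
        ((fderivInnerCLM ℝ (U xm - V ym, xm - ym)).comp
          ((-DV).prod (-(ContinuousLinearMap.id ℝ (Euc d))))) ym := by
      have hf : HasFDerivAt (fun z => U xm - V z) (-DV) ym := hVd.const_sub _
      have hg : HasFDerivAt (fun z : Euc d => xm - z) (-(ContinuousLinearMap.id ℝ (Euc d))) ym :=
        (hasFDerivAt_id ym).const_sub _
      exact hf.inner ℝ hg
    have E1 : ∑ i, (U xm i - V ym i) * ξ i + ∑ i, DU ξ i * (xm i - ym i) ≤ 0 := by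
      have h := dir_min hL1 hminx hfeasx
      rw [ContinuousLinearMap.comp_apply, ContinuousLinearMap.prod_apply,
        fderivInnerCLM_apply] at h
      simp only [ContinuousLinearMap.coe_id', id_eq, map_neg, inner_neg_left,
        inner_neg_right] at h
      rw [innSum, innSum] at h
      simp only [PiLp.sub_apply] at h
      linarith
    have E2 : 0 ≤ ∑ i, (U xm i - V ym i) * η i + ∑ i, DV η i * (xm i - ym i) := by
      have h := dir_min hL2 hminy hfeasy
      rw [ContinuousLinearMap.comp_apply, ContinuousLinearMap.prod_apply,
        fderivInnerCLM_apply] at h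
      simp only [ContinuousLinearMap.neg_apply, neg_neg, map_neg, inner_neg_left,
        inner_neg_right, ContinuousLinearMap.coe_id', id_eq] at h
      rw [innSum, innSum] at h
      simp only [PiLp.sub_apply] at h
      linarith
    have E3 : 0 ≤ ∑ i, (G xm (U xm) i - G ym (V ym) i) * (xm i - ym i)
        + ∑ i, (F xm (U xm) i - F ym (V ym) i) * (U xm i - V ym i) := by
      have h := hyp3 xm hxmO ym hymO (U xm) (V ym)
      rw [innSum, innSum] at h
      simp only [PiLp.sub_apply] at h
      exact h
    have E4 : ∑ i, (max (U xm i) 0 - max (V ym i) 0) * (xm i - ym i)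
        ≤ ∑ i, (U xm i - V ym i) * (b xm i * xm i - c ym i * ym i) := by
      refine Finset.sum_le_sum fun i _ => ?_
      exact pen_ineq (U xm i) (V ym i) (xm i) (ym i) (b xm i) (c ym i) (hxmO i) (hymO i)
        (hUb xm hxmO i).1.1 (hUb xm hxmO i).1.2 (hUb xm hxmO i).2.1 (hUb xm hxmO i).2.2
        (hVb ym hymO i).1.1 (hVb ym hymO i).1.2 (hVb ym hymO i).2.1 (hVb ym hymO i).2.2
    have E5 : ∑ i, (U xm i - V ym i) * (xm i - ym i)
        ≤ ∑ i, (ContinuousLinearMap.adjoint T (U (T xm)) i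
            - ContinuousLinearMap.adjoint T (V (T ym)) i) * (xm i - ym i) := by
      have hTx : T xm ∈ Ball1 d R := hyp2T R hRR₀ xm hxmB
      have hTy : T ym ∈ Ball1 d R := hyp2T R hRR₀ ym hymB
      have h1 : (⟪U xm - V ym, xm - ym⟫ : ℝ) ≤ ⟪U (T xm) - V (T ym), T xm - T ym⟫ :=
        isMinOn_iff.1 hmin (T xm, T ym) (Set.mk_mem_prod hTx hTy)
      have h2 : (⟪ContinuousLinearMap.adjoint T (U (T xm))
          - ContinuousLinearMap.adjoint T (V (T ym)), xm - ym⟫ : ℝ)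
          = ⟪U (T xm) - V (T ym), T xm - T ym⟫ := by
        rw [← map_sub, ContinuousLinearMap.adjoint_inner_left, map_sub]
      have h3 := h1.trans_eq h2.symm
      rw [innSum, innSum] at h3
      simp only [PiLp.sub_apply] at h3
      exact h3
    have E6 : ∑ i, (G xm (U xm) i - G ym (V ym) i) * (xm i - ym i)
        = r * ∑ i, (U xm i - V ym i) * (xm i - ym i)
        + (1/ε) * ∑ i, (max (U xm i) 0 - max (V ym i) 0) * (xm i - ym i)
        + ∑ i, (DU ξ i - DV η i) * (xm i - ym i)
        + lam * (∑ i, (U xm i - V ym i) * (xm i - ym i)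
            - ∑ i, (ContinuousLinearMap.adjoint T (U (T xm)) i
                - ContinuousLinearMap.adjoint T (V (T ym)) i) * (xm i - ym i)) := by
      have step : ∀ i, (G xm (U xm) i - G ym (V ym) i) * (xm i - ym i)
          = r * ((U xm i - V ym i) * (xm i - ym i))
          + (1/ε) * ((max (U xm i) 0 - max (V ym i) 0) * (xm i - ym i))
          + (DU ξ i - DV η i) * (xm i - ym i)
          + lam * ((U xm i - V ym i) * (xm i - ym i)
              - (ContinuousLinearMap.adjoint T (U (T xm)) i
                  - ContinuousLinearMap.adjoint T (V (T ym)) i) * (xm i - ym i)) := by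
        intro i
        linear_combination (xm i - ym i) * (hpV i) - (xm i - ym i) * (hpU i)
      calc ∑ i, (G xm (U xm) i - G ym (V ym) i) * (xm i - ym i)
          = ∑ i, (r * ((U xm i - V ym i) * (xm i - ym i))
          + (1/ε) * ((max (U xm i) 0 - max (V ym i) 0) * (xm i - ym i))
          + (DU ξ i - DV η i) * (xm i - ym i)
          + lam * ((U xm i - V ym i) * (xm i - ym i)
              - (ContinuousLinearMap.adjoint T (U (T xm)) i
                  - ContinuousLinearMap.adjoint T (V (T ym)) i) * (xm i - ym i))) :=
            Finset.sum_congr rfl fun i _ => step i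
        _ = _ := by
            simp only [Finset.sum_add_distrib, Finset.sum_sub_distrib, ← Finset.mul_sum]
    have hSA : ∑ i, (DU ξ i - DV η i) * (xm i - ym i)
        = ∑ i, DU ξ i * (xm i - ym i) - ∑ i, DV η i * (xm i - ym i) := by
      rw [← Finset.sum_sub_distrib]
      exact Finset.sum_congr rfl fun i _ => by ring
    have hsplit2 : ∑ i, (U xm i - V ym i) * ξ i - ∑ i, (U xm i - V ym i) * η i
        = (1/ε) * ∑ i, (U xm i - V ym i) * (b xm i * xm i - c ym i * ym i)
        + ∑ i, (F xm (U xm) i - F ym (V ym) i) * (U xm i - V ym i) := by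
      rw [← Finset.sum_sub_distrib, Finset.mul_sum, ← Finset.sum_add_distrib]
      refine Finset.sum_congr rfl fun i _ => ?_
      rw [hξi i, hηi i]; ring
    have E4' : (1/ε) * ∑ i, (max (U xm i) 0 - max (V ym i) 0) * (xm i - ym i)
        ≤ (1/ε) * ∑ i, (U xm i - V ym i) * (b xm i * xm i - c ym i * ym i) :=
      mul_le_mul_of_nonneg_left E4 (by positivity)
    have E5' : lam * (∑ i, (U xm i - V ym i) * (xm i - ym i)
        - ∑ i, (ContinuousLinearMap.adjoint T (U (T xm)) i
            - ContinuousLinearMap.adjoint T (V (T ym)) i) * (xm i - ym i)) ≤ 0 := by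
      have h := mul_le_mul_of_nonneg_left (sub_nonpos.2 E5) hlam
      simpa using h
    have key : 0 ≤ r * ∑ i, (U xm i - V ym i) * (xm i - ym i) := by
      linarith [E1, E2, E3, E4', E5', E6, hSA, hsplit2]
    have hSm : 0 ≤ ∑ i, (U xm i - V ym i) * (xm i - ym i) :=
      le_of_mul_le_mul_left (by linarith) hr
    rw [innSum]
    simp only [PiLp.sub_apply]
    exact hSm
  have hfin := isMinOn_iff.1 hmin (x, y) (Set.mk_mem_prod hxB hyB)
  exact le_trans hmain hfin


lemma euc_inner_sum {d : ℕ} (a b : Euc d) : (⟪a, b⟫ : ℝ) = ∑ i, a i * b i := by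
  simp [PiLp.inner_apply, RCLike.inner_apply, conj_trivial, mul_comm]

/-- One-sided comparison of two maps from the monotonicity relation. -/
lemma le_of_core {d : ℕ} (W Z : Euc d → Euc d) (hZc : Continuous Z)
    (hcore : ∀ a ∈ Od d, ∀ b ∈ Od d, 0 ≤ ⟪W a - Z b, a - b⟫)
    (x : Euc d) (hx : x ∈ Od d) (i : Fin d) : W x i ≤ Z x i := by
  set e : Euc d := EuclideanSpace.single i (1:ℝ) with he
  have hmem : ∀ t : ℝ, 0 ≤ t → x + t • e ∈ Od d := by
    intro t ht j
    have hxj := hx j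
    have : (x + t • e) j = x j + t * e j := by simp
    rw [this, he]
    rcases eq_or_ne j i with h | h
    · subst h; simp [EuclideanSpace.single_apply]; positivity
    · simp [EuclideanSpace.single_apply, h, hxj]
  have hineq : ∀ t : ℝ, 0 < t → W x i - Z (x + t • e) i ≤ 0 := by
    intro t ht
    have h := hcore x hx (x + t • e) (hmem t ht.le)
    have hxy : x - (x + t • e) = -(t • e) := by abel
    rw [hxy, inner_neg_right, inner_smul_right] at h
    have hwi : (⟪W x - Z (x + t • e), e⟫ : ℝ) = W x i - Z (x + t • e) i := by
      rw [he]
      simp [EuclideanSpace.inner_single_right]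
    rw [hwi] at h
    nlinarith
  have hlim : Filter.Tendsto (fun t : ℝ => W x i - Z (x + t • e) i)
      (nhdsWithin (0:ℝ) (Set.Ioi 0)) (nhds (W x i - Z x i)) := by
    have hc : Continuous fun t : ℝ => W x i - Z (x + t • e) i :=
      continuous_const.sub ((EuclideanSpace.proj i (𝕜 := ℝ)).continuous.comp
        (hZc.comp (continuous_const.add (continuous_id.smul continuous_const))))
    have := hc.tendsto 0
    have h0 : Z (x + (0:ℝ) • e) i = Z x i := by norm_num
    rw [h0] at this
    exact this.mono_left nhdsWithin_le_nhds
  have hle : W x i - Z x i ≤ 0 := by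
    refine le_of_tendsto hlim ?_
    filter_upwards [self_mem_nhdsWithin] with t (ht : 0 < t)
    exact hineq t ht
  linarith

/-- Proposition 3.1: under Hypotheses 1-3, there is at most one C¹ solution of the ε-penalized
optimal-stopping master equation, and it is a monotone map. -/
theorem uniqueness_and_monotonicity_penalized_optimal_stopping
    (d : ℕ) (hd : 1 ≤ d) (ε : ℝ) (hε : 0 < ε)
    (F G : Euc d → Euc d → Euc d)
    (hFc : Continuous fun q : Euc d × Euc d => F q.1 q.2)
    (hGc : Continuous fun q : Euc d × Euc d => G q.1 q.2)
    (r lam : ℝ) (hr : 0 < r) (hlam : 0 ≤ lam) (T : Euc d →L[ℝ] Euc d)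
    -- Hypothesis 1
    (hyp1F : ∀ x ∈ Od d, ∀ p : Euc d, ∀ i, x i = 0 → F x p i ≤ 0)
    (hyp1T : ∀ x ∈ Od d, T x ∈ Od d)
    -- Hypothesis 2
    (R₀ : ℝ) (hR₀ : 0 < R₀)
    (hyp2F : ∀ x ∈ Od d, ∀ p : Euc d, R₀ ≤ ∑ i, x i → 0 ≤ ∑ i, F x p i)
    (hyp2T : ∀ R ≥ R₀, ∀ x ∈ Ball1 d R, T x ∈ Ball1 d R)
    -- Hypothesis 3
    (hyp3 : ∀ x ∈ Od d, ∀ y ∈ Od d, ∀ p q : Euc d,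
      0 ≤ ⟪G x p - G y q, x - y⟫ + ⟪F x p - F y q, p - q⟫)
    (U V : Euc d → Euc d) (b c : Euc d → Fin d → ℝ)
    (hU : IsPenalizedSolOS d F G r lam ε T U b)
    (hV : IsPenalizedSolOS d F G r lam ε T V c) :
    (∀ x ∈ Od d, U x = V x) ∧
    (∀ x ∈ Od d, ∀ y ∈ Od d, 0 ≤ ⟪U x - U y, x - y⟫) := by
  have hcoreUV := core_mono d ε hε F G r lam hr hlam T hyp1F R₀ hR₀ hyp2F hyp2T hyp3 U V b c hU hV
  have hcoreVU := core_mono d ε hε F G r lam hr hlam T hyp1F R₀ hR₀ hyp2F hyp2T hyp3 V U c b hV hU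
  have hcoreUU := core_mono d ε hε F G r lam hr hlam T hyp1F R₀ hR₀ hyp2F hyp2T hyp3 U U b b hU hU
  refine ⟨?_, fun x hx y hy => hcoreUU x hx y hy⟩
  intro x hx
  ext i
  exact le_antisymm (le_of_core U V hV.1.continuous hcoreUV x hx i)
    (le_of_core V U hU.1.continuous hcoreVU x hx i)
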